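/- Let χ : {1,...,n} → {ℓ,r} and ε : {1,...,n} → I with I an index set, and let 𝒥 be the set of maximal ε-monochromatic χ-intervals. If π ∈ BNC(χ) is such that every block of π is ε-monochromatic (π ≤ ε), then there exists some J ∈ 𝒥 which is isolated in π, i.e., π refines the two-block partition {J, Jᶜ} (interpreted appropriately if J = {1,...,n}). -/

import Mathlib

noncomputable def chiKey {n : ℕ} (χ : Fin n → Bool) (i : Fin n) : Lex (ℕ × ℕ) :=
  toLex (if χ i then 0 else 1, if χ i then (i : ℕ) else n - (i : ℕ))

/-- The permutation `s_χ` listing `χ⁻¹(ℓ)` increasingly and then `χ⁻¹(r)` decreasingly. -/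
noncomputable def sChi {n : ℕ} (χ : Fin n → Bool) : Equiv.Perm (Fin n) :=
  Tuple.sort (chiKey χ)

/-- The order `≺_χ`. -/
def ltChi {n : ℕ} (χ : Fin n → Bool) (i j : Fin n) : Prop :=
  (sChi χ).symm i < (sChi χ).symm j

/-- `I` is a `χ`-interval: an interval for the order `≺_χ`. -/
def IsChiInterval {n : ℕ} (χ : Fin n → Bool) (I : Set (Fin n)) : Prop :=
  ∀ a b c : Fin n, a ∈ I → c ∈ I → ltChi χ a b → ltChi χ b c → b ∈ I

/-- `I` is `ε`-monochromatic: `ε` is constant on `I`. -/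
def IsMono {n : ℕ} {ι : Type*} (ε : Fin n → ι) (I : Set (Fin n)) : Prop :=
  ∀ a ∈ I, ∀ b ∈ I, ε a = ε b

/-- `J` is a maximal `ε`-monochromatic `χ`-interval. -/
def IsMaxMono {n : ℕ} {ι : Type*} (χ : Fin n → Bool) (ε : Fin n → ι)
    (J : Set (Fin n)) : Prop :=
  J.Nonempty ∧ IsChiInterval χ J ∧ IsMono ε J ∧
    ∀ K : Set (Fin n), IsChiInterval χ K → IsMono ε K → J ⊆ K → J = K

def IsNonCrossing {n : ℕ} (r : Setoid (Fin n)) : Prop :=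
  ∀ a b c d : Fin n, a < b → b < c → c < d → r a c → r b d → r a b

/-- Bi-non-crossing partitions. -/
def IsBNC {n : ℕ} (χ : Fin n → Bool) (π : Setoid (Fin n)) : Prop :=
  IsNonCrossing (π.comap (sChi χ))


section Aux

variable {n : ℕ} {ι : Type*}

/-- `p` and `q` are in the same `ε`-monochromatic run: `ε` is constant (equal to `ε p`)
on the (unordered) interval between `p` and `q`. -/
def SRrel (ε : Fin n → ι) (p q : Fin n) : Prop :=
  ∀ x : Fin n, (p.val ≤ x.val ∧ x.val ≤ q.val) ∨ (q.val ≤ x.val ∧ x.val ≤ p.val) → ε x = ε p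

lemma SRrel_self_eq (ε : Fin n → ι) {p q : Fin n} (h : SRrel ε p q) : ε q = ε p := by
  apply h
  rcases le_total p.val q.val with h' | h'
  · exact Or.inl ⟨h', le_rfl⟩
  · exact Or.inr ⟨le_rfl, h'⟩

lemma SRrel_refl (ε : Fin n → ι) (p : Fin n) : SRrel ε p p := by
  intro x hx
  have hx' : x = p := Fin.ext (by omega)
  rw [hx']

lemma SRrel_symm (ε : Fin n → ι) {p q : Fin n} (h : SRrel ε p q) : SRrel ε q p := by
  have h0 := SRrel_self_eq ε h
  intro x hx
  rw [h0]
  exact h x (Or.symm hx)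

lemma SRrel_trans (ε : Fin n → ι) {p a b : Fin n} (h1 : SRrel ε p a) (h2 : SRrel ε a b) :
    SRrel ε p b := by
  have hap : ε a = ε p := SRrel_self_eq ε h1
  intro x hx
  have hcases : ((p.val ≤ x.val ∧ x.val ≤ a.val) ∨ (a.val ≤ x.val ∧ x.val ≤ p.val)) ∨
      ((a.val ≤ x.val ∧ x.val ≤ b.val) ∨ (b.val ≤ x.val ∧ x.val ≤ a.val)) := by omega
  rcases hcases with h | h
  · exact h1 x h
  · rw [h2 x h, hap]

/-- The maximal monochromatic run containing `q`. -/
def Rset (ε : Fin n → ι) (q : Fin n) : Set (Fin n) := {z | SRrel ε q z}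

lemma Rset_interval (ε : Fin n → ι) (q : Fin n) :
    ∀ p z r : Fin n, p ∈ Rset ε q → r ∈ Rset ε q → p < z → z < r → z ∈ Rset ε q := by
  intro p z r hp hr hpz hzr
  have hpz' : p.val < z.val := hpz
  have hzr' : z.val < r.val := hzr
  intro x hx
  have hcases : ((q.val ≤ x.val ∧ x.val ≤ p.val) ∨ (p.val ≤ x.val ∧ x.val ≤ q.val)) ∨
      ((q.val ≤ x.val ∧ x.val ≤ r.val) ∨ (r.val ≤ x.val ∧ x.val ≤ q.val)) := by omega
  rcases hcases with h | h
  · exact hp x h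
  · exact hr x h

lemma Rset_mono (ε : Fin n → ι) (q : Fin n) : IsMono ε (Rset ε q) := by
  intro a ha b hb
  rw [SRrel_self_eq ε ha, SRrel_self_eq ε hb]

lemma Rset_max (ε : Fin n → ι) (q : Fin n) (K : Set (Fin n))
    (hK : ∀ p z r : Fin n, p ∈ K → r ∈ K → p < z → z < r → z ∈ K)
    (hKm : IsMono ε K) (hsub : Rset ε q ⊆ K) : Rset ε q = K := by
  apply Set.Subset.antisymm hsub
  intro z hz
  have hq : q ∈ K := hsub (SRrel_refl ε q)
  intro x hx
  have hxK : x ∈ K := by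
    by_cases h1 : x = q
    · rwa [h1]
    by_cases h2 : x = z
    · rwa [h2]
    have h1' : x.val ≠ q.val := fun h => h1 (Fin.ext h)
    have h2' : x.val ≠ z.val := fun h => h2 (Fin.ext h)
    rcases hx with ⟨hl, hr⟩ | ⟨hl, hr⟩
    · exact hK q x z hq hz (Fin.lt_def.mpr (by omega)) (Fin.lt_def.mpr (by omega))
    · exact hK z x q hz hq (Fin.lt_def.mpr (by omega)) (Fin.lt_def.mpr (by omega))
  exact hKm x hxK q hq

/-- The core combinatorial lemma, in position space with the standard order on `Fin n`:
there is a point `q` whose maximal run is saturated by the non-crossing partition. -/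
lemma core_exists_isolated (hn : 1 ≤ n) (ε : Fin n → ι) (ρ : Setoid (Fin n))
    (hnc : IsNonCrossing ρ) (hm : ∀ a b : Fin n, ρ a b → ε a = ε b) :
    ∃ q : Fin n, ∀ x y : Fin n, ρ x y → (x ∈ Rset ε q ↔ y ∈ Rset ε q) := by
  classical
  by_cases hS : ∀ x y : Fin n, ρ x y → SRrel ε x y
  · refine ⟨⟨0, hn⟩, fun x y hxy => ?_⟩
    constructor
    · intro hx; exact SRrel_trans ε hx (hS x y hxy)
    · intro hy; exact SRrel_trans ε hy (hS y x (ρ.symm' hxy))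
  · push_neg at hS
    obtain ⟨x0, y0, hxy0, hns0⟩ := hS
    set T : Finset (Fin n × Fin n) :=
      Finset.univ.filter (fun ab => ab.1 < ab.2 ∧ ρ ab.1 ab.2 ∧ ¬ SRrel ε ab.1 ab.2)
      with hT
    have hTne : T.Nonempty := by
      rcases lt_trichotomy x0 y0 with h | h | h
      · exact ⟨(x0, y0), by simp [hT, h, hxy0, hns0]⟩
      · exact absurd (h ▸ SRrel_refl ε x0) hns0
      · refine ⟨(y0, x0), ?_⟩
        simp only [hT, Finset.mem_filter, Finset.mem_univ, true_and]
        exact ⟨h, ρ.symm' hxy0, fun hs => hns0 (SRrel_symm ε hs)⟩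
    obtain ⟨⟨a, b⟩, hab, hmin⟩ := T.exists_min_image (fun ab => ab.2.val - ab.1.val) hTne
    simp only [hT, Finset.mem_filter, Finset.mem_univ, true_and] at hab
    obtain ⟨hab_lt, hab_rel, hab_ns⟩ := hab
    have hab_lt' : a.val < b.val := hab_lt
    have hba : ε b = ε a := (hm a b hab_rel).symm
    have hq_ex : ∃ x : Fin n,
        ((a.val ≤ x.val ∧ x.val ≤ b.val) ∨ (b.val ≤ x.val ∧ x.val ≤ a.val)) ∧ ε x ≠ ε a := by
      by_contra h
      push_neg at h
      exact hab_ns (fun x hx => h x hx)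
    obtain ⟨q, hqmem, hqne⟩ := hq_ex
    have hq1 : a.val ≤ q.val ∧ q.val ≤ b.val := by omega
    have hrange : ∀ z ∈ Rset ε q, a.val < z.val ∧ z.val < b.val := by
      intro z hz
      constructor
      · by_contra h
        push_neg at h
        exact hqne (hz a (by omega)).symm
      · by_contra h
        push_neg at h
        exact hqne (((hz b (by omega)).symm).trans hba)
    refine ⟨q, ?_⟩
    have key : ∀ x y : Fin n, ρ x y → x ∈ Rset ε q → y ∈ Rset ε q := by
      intro x y hxy hx
      by_contra hy
      have hεx : ε x = ε q := SRrel_self_eq ε hx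
      have hnsxy : ¬ SRrel ε x y := fun h => hy (SRrel_trans ε hx h)
      obtain ⟨hax, hxb⟩ := hrange x hx
      rcases lt_trichotomy x y with h | h | h
      · have hmem : (x, y) ∈ T := by
          simp only [hT, Finset.mem_filter, Finset.mem_univ, true_and]
          exact ⟨h, hxy, hnsxy⟩
        have hd := hmin (x, y) hmem
        simp only at hd
        have hxy' : x.val < y.val := h
        have hrel : ρ a x :=
          hnc a x b y (Fin.lt_def.mpr (by omega)) (Fin.lt_def.mpr (by omega))
            (Fin.lt_def.mpr (by omega)) hab_rel hxy
        apply hqne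
        rw [← hεx]
        exact (hm a x hrel).symm
      · exact hy (h ▸ hx)
      · have hmem : (y, x) ∈ T := by
          simp only [hT, Finset.mem_filter, Finset.mem_univ, true_and]
          exact ⟨h, ρ.symm' hxy, fun hs => hnsxy (SRrel_symm ε hs)⟩
        have hd := hmin (y, x) hmem
        simp only at hd
        have hxy' : y.val < x.val := h
        have hrel : ρ y a :=
          hnc y a x b (Fin.lt_def.mpr (by omega)) (Fin.lt_def.mpr (by omega))
            (Fin.lt_def.mpr (by omega)) (ρ.symm' hxy) hab_rel
        have hεy : ε y = ε q := (hm x y hxy).symm.trans hεx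
        apply hqne
        rw [← hεy]
        exact hm y a hrel
    intro x y hxy
    exact ⟨fun h => key x y hxy h, fun h => key y x (ρ.symm' hxy) h⟩

end Aux

/-- If `π ∈ BNC(χ)` has all blocks `ε`-monochromatic (`π ≤ ε`), then some maximal
`ε`-monochromatic `χ`-interval `J` is isolated in `π`: no block of `π` meets both
`J` and `Jᶜ`. -/
theorem exists_isolated_maximal_interval {n : ℕ} {ι : Type*} (hn : 1 ≤ n)
    (χ : Fin n → Bool) (ε : Fin n → ι) (π : Setoid (Fin n)) (hπ : IsBNC χ π)
    (hmono : ∀ a b : Fin n, π a b → ε a = ε b) :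
    ∃ J : Set (Fin n), IsMaxMono χ ε J ∧ ∀ a b : Fin n, π a b → (a ∈ J ↔ b ∈ J) := by
  classical
  set e := sChi χ with he
  have hnc : IsNonCrossing (π.comap ⇑e) := hπ
  have hrel : ∀ p q : Fin n, (π.comap ⇑e) p q ↔ π (e p) (e q) := fun p q => Iff.rfl
  obtain ⟨q, hq⟩ := core_exists_isolated hn (ε ∘ ⇑e) (π.comap ⇑e) hnc
    (fun a b h => hmono _ _ ((hrel a b).mp h))
  refine ⟨(⇑e.symm) ⁻¹' (Rset (ε ∘ ⇑e) q), ⟨?_, ?_, ?_, ?_⟩, ?_⟩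
  · exact ⟨e q, by
      simp only [Set.mem_preimage, Equiv.symm_apply_apply]
      exact SRrel_refl _ q⟩
  · intro a b c ha hc hab hbc
    have hab' : e.symm a < e.symm b := hab
    have hbc' : e.symm b < e.symm c := hbc
    exact Rset_interval (ε ∘ ⇑e) q (e.symm a) (e.symm b) (e.symm c) ha hc hab' hbc'
  · intro a ha b hb
    have h1 : (ε ∘ ⇑e) (e.symm a) = (ε ∘ ⇑e) q := SRrel_self_eq _ ha
    have h2 : (ε ∘ ⇑e) (e.symm b) = (ε ∘ ⇑e) q := SRrel_self_eq _ hb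
    simpa [Function.comp, Equiv.apply_symm_apply] using h1.trans h2.symm
  · intro K hKint hKmono hsub
    have hK'int : ∀ p z r : Fin n, p ∈ ⇑e ⁻¹' K → r ∈ ⇑e ⁻¹' K → p < z → z < r →
        z ∈ ⇑e ⁻¹' K := by
      intro p z r hp hr h1 h2
      refine hKint (e p) (e z) (e r) hp hr ?_ ?_
      · show (sChi χ).symm (e p) < (sChi χ).symm (e z)
        rw [← he]
        simpa using h1
      · show (sChi χ).symm (e z) < (sChi χ).symm (e r)
        rw [← he]
        simpa using h2
    have hK'mono : IsMono (ε ∘ ⇑e) (⇑e ⁻¹' K) := fun p hp p' hp' => hKmono (e p) hp (e p') hp'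
    have hsub' : Rset (ε ∘ ⇑e) q ⊆ ⇑e ⁻¹' K := by
      intro z hz
      have : e z ∈ (⇑e.symm) ⁻¹' (Rset (ε ∘ ⇑e) q) := by
        simpa only [Set.mem_preimage, Equiv.symm_apply_apply] using hz
      exact hsub this
    have heq := Rset_max (ε ∘ ⇑e) q _ hK'int hK'mono hsub'
    ext i
    simp only [Set.mem_preimage]
    rw [heq]
    simp only [Set.mem_preimage, Equiv.apply_symm_apply]
  · intro a b hab
    have h : (π.comap ⇑e) (e.symm a) (e.symm b) := by
      rw [hrel]
      simpa only [Equiv.apply_symm_apply] using hab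
    simpa only [Set.mem_preimage] using hq (e.symm a) (e.symm b) h
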